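/- arXiv:1802.09279 — 2 statements merged into one kernel-verified Lean document; each statement's English description precedes it below -/
import Mathlib

section
/- Let b > 1 and M > ζ(b) be real numbers, let k₀, k₂ ≥ 0 be integers, let σ₁ > σ₁' > 0, 0 < σ₂ < σ₂' and σ₃ > 0 be real numbers, and let H = {z ∈ ℂ : c ≤ Im z ≤ d, Re z ≤ 0} be a closed horizontal strip. Then there exists a constant Č > 0, depending only on k₀, k₂, σ₁, σ₁', σ₂, σ₂', σ₃, M and b (independent of ε, β and v), such that for every ε ∈ ℂ with ε ≠ 0, every integer β ≥ 0, every real N ≥ 0 and every function v : ℂ → ℂ satisfying |v(τ)| ≤ N |τ| exp((σ₁'/|ε|) r_b(β) |τ| − σ₂' s_b(β) exp(σ₃ |τ|)) for all τ ∈ H, one has |τ^{k₀} exp(−k₂ τ) v(τ)| ≤ Č |ε|^{k₀} N |τ| exp((σ₁/|ε|) r_b(β) |τ| − σ₂ s_b(β) exp(σ₃ |τ|)) for all τ ∈ H. -/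
/-- `r_b(β) = Σ_{n=0}^{β} 1/(n+1)^b`. -/
noncomputable def rb (b : ℝ) (β : ℕ) : ℝ := ∑ n ∈ Finset.range (β + 1), 1 / ((n : ℝ) + 1) ^ b

/-- `ζ(b) = Σ_{n=0}^{∞} 1/(n+1)^b`. -/
noncomputable def zetab (b : ℝ) : ℝ := ∑' n : ℕ, 1 / ((n : ℝ) + 1) ^ b

/-- The closed horizontal strip `{z : c ≤ Im z ≤ d, Re z ≤ 0}`. -/
def strip (c d : ℝ) : Set ℂ := {z : ℂ | c ≤ z.im ∧ z.im ≤ d ∧ z.re ≤ 0}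

lemma rb_ge_one (b : ℝ) (hb : 0 < b) (β : ℕ) : 1 ≤ rb b β := by
  unfold rb
  have h0 : (1 : ℝ) = 1 / ((0 : ℝ) + 1) ^ b := by norm_num
  calc (1 : ℝ) = 1 / (((0 : ℕ) : ℝ) + 1) ^ b := by norm_num
    _ ≤ ∑ n ∈ Finset.range (β + 1), 1 / ((n : ℝ) + 1) ^ b := by
        apply Finset.single_le_sum (f := fun n : ℕ => 1 / ((n : ℝ) + 1) ^ b)
        · intro i _
          positivity
        · simp

lemma summable_aux (b : ℝ) (hb : 1 < b) : Summable (fun n : ℕ => 1 / ((n : ℝ) + 1) ^ b) := by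
  have := Real.summable_one_div_nat_rpow.mpr hb
  have h := (summable_nat_add_iff 1).mpr this
  simpa [Nat.cast_add, Nat.cast_one] using h

lemma rb_le_zetab (b : ℝ) (hb : 1 < b) (β : ℕ) : rb b β ≤ zetab b := by
  exact Summable.sum_le_tsum (Finset.range (β + 1)) (fun i _ => by positivity) (summable_aux b hb)

/-- `y^k ≤ k! * exp y` for `y ≥ 0`. -/
lemma pow_le_factorial_mul_exp (y : ℝ) (hy : 0 ≤ y) (k : ℕ) :
    y ^ k ≤ (k.factorial : ℝ) * Real.exp y := by
  have h := Real.pow_div_factorial_le_exp y hy k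
  have hk : (0 : ℝ) < k.factorial := by positivity
  calc y ^ k = (y ^ k / k.factorial) * k.factorial := by field_simp
    _ ≤ Real.exp y * k.factorial := by
        apply mul_le_mul_of_nonneg_right h hk.le
    _ = (k.factorial : ℝ) * Real.exp y := by ring

lemma quad_aux (k κ σ x : ℝ) (hκ : 0 < κ) (hσ : 0 < σ) :
    k * x ≤ k ^ 2 / (2 * κ * σ ^ 2) + κ * ((σ * x) ^ 2 / 2) := by
  rw [div_add' _ _ _ (by positivity), le_div_iff₀ (by positivity)]
  nlinarith [sq_nonneg (k - κ * σ ^ 2 * x)]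

lemma sq_half_le_exp (y : ℝ) (hy : 0 ≤ y) : y ^ 2 / 2 ≤ Real.exp y := by
  nlinarith [Real.quadratic_le_exp_of_nonneg hy]

/-- The constant `Cc` depends only on `k₀, k₂, σ₁, σ₁', σ₂, σ₂', σ₃, M, b`; it is
independent of the strip, `ε`, `β` and `v`. -/
theorem stmt5 (b M : ℝ) (hb : 1 < b) (hM : zetab b < M)
    (k₀ k₂ : ℕ) (σ₁ σ₁' σ₂ σ₂' σ₃ : ℝ)
    (hσ₁' : 0 < σ₁') (hσ₁ : σ₁' < σ₁) (hσ₂ : 0 < σ₂) (hσ₂' : σ₂ < σ₂') (hσ₃ : 0 < σ₃) :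
    ∃ Cc : ℝ, 0 < Cc ∧ ∀ c d : ℝ, c < d →
      ∀ (ε : ℂ), ε ≠ 0 → ∀ β : ℕ, ∀ N : ℝ, 0 ≤ N →
      ∀ v : ℂ → ℂ,
        (∀ τ ∈ strip c d, ‖v τ‖ ≤ N * ‖τ‖ *
          Real.exp (σ₁' / ‖ε‖ * rb b β * ‖τ‖
            - σ₂' * (M - rb b β) * Real.exp (σ₃ * ‖τ‖))) →
        ∀ τ ∈ strip c d,
          ‖τ ^ k₀ * Complex.exp (-(k₂ : ℂ) * τ) * v τ‖ ≤
            Cc * ‖ε‖ ^ k₀ * N * ‖τ‖ *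
              Real.exp (σ₁ / ‖ε‖ * rb b β * ‖τ‖
                - σ₂ * (M - rb b β) * Real.exp (σ₃ * ‖τ‖)) := by
  set lam : ℝ := σ₁ - σ₁' with hlam
  set κ : ℝ := (σ₂' - σ₂) * (M - zetab b) with hκ
  have hlampos : 0 < lam := by rw [hlam]; linarith
  have hκpos : 0 < κ := by rw [hκ]; exact mul_pos (by linarith) (by linarith)
  set C1 : ℝ := (k₀.factorial : ℝ) / lam ^ k₀ with hC1
  set T : ℝ := (k₂ : ℝ) ^ 2 / (2 * κ * σ₃ ^ 2) with hT
  have hC1pos : 0 < C1 := by rw [hC1]; positivity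
  have hTm : T = (k₂ : ℝ) ^ 2 / (2 * κ * σ₃ ^ 2) := hT
  clear_value C1 T
  refine ⟨C1 * Real.exp T, by positivity, ?_⟩
  intro c d _ ε hε β N hN v hv τ hτ
  set a : ℝ := ‖ε‖ with ha
  have hapos : 0 < a := by rw [ha]; exact norm_pos_iff.mpr hε
  set x : ℝ := ‖τ‖ with hx
  have hxnn : 0 ≤ x := by rw [hx]; exact norm_nonneg τ
  set r : ℝ := rb b β with hr
  have hr1 : 1 ≤ r := by rw [hr]; exact rb_ge_one b (by linarith) β
  have hrz : r ≤ zetab b := by rw [hr]; exact rb_le_zetab b hb β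
  set s : ℝ := M - r with hsdef
  have hs : M - zetab b ≤ s := by rw [hsdef]; linarith
  have hspos : 0 < s := lt_of_lt_of_le (by linarith) hs
  set E : ℝ := Real.exp (σ₃ * x) with hE
  have hEnn : 0 ≤ E := by rw [hE]; exact Real.exp_nonneg _
  have hEq : (σ₃ * x) ^ 2 / 2 ≤ E := by
    rw [hE]; exact sq_half_le_exp _ (mul_nonneg hσ₃.le hxnn)
  have hretau : τ.re ≤ 0 := hτ.2.2
  have habsre : -τ.re ≤ x := by
    rw [hx]; exact (neg_le_abs τ.re).trans (Complex.abs_re_le_norm τ)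
  have hk2nn : (0:ℝ) ≤ (k₂:ℝ) := Nat.cast_nonneg _
  have hexp2 : ‖Complex.exp (-(k₂ : ℂ) * τ)‖ ≤ Real.exp (k₂ * x) := by
    rw [Complex.norm_exp]
    apply Real.exp_le_exp.mpr
    have hre : (-(k₂ : ℂ) * τ).re = -(k₂ : ℝ) * τ.re := by simp
    rw [hre]
    have h := mul_le_mul_of_nonneg_left habsre hk2nn
    linarith
  have hlam' : σ₁' = σ₁ - lam := by rw [hlam]; ring
  have hκ' : κ ≤ (σ₂' - σ₂) * s := by
    rw [hκ]; exact mul_le_mul_of_nonneg_left hs (by linarith)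
  have hvb := hv τ hτ
  rw [← hx, ← hE] at hvb
  clear_value lam κ a x r s E
  have ha0 : a ≠ 0 := ne_of_gt hapos
  have hlam0 : lam ≠ 0 := ne_of_gt hlampos
  have h1 : x ^ k₀ ≤ C1 * a ^ k₀ * Real.exp (lam * x / a) := by
    have hple := pow_le_factorial_mul_exp (lam * x / a)
      (div_nonneg (mul_nonneg hlampos.le hxnn) hapos.le) k₀
    have hxa : x ^ k₀ = (lam * x / a) ^ k₀ * (a / lam) ^ k₀ := by
      rw [← mul_pow]
      congr 1
      field_simp
    rw [hxa]
    calc (lam * x / a) ^ k₀ * (a / lam) ^ k₀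
        ≤ ((k₀.factorial : ℝ) * Real.exp (lam * x / a)) * (a / lam) ^ k₀ :=
          mul_le_mul_of_nonneg_right hple
            (pow_nonneg (div_nonneg hapos.le hlampos.le) _)
      _ = C1 * a ^ k₀ * Real.exp (lam * x / a) := by
          rw [hC1, div_pow]; ring
  have hquad : (k₂ : ℝ) * x ≤ T + κ * ((σ₃ * x) ^ 2 / 2) := by
    rw [hTm]; exact quad_aux _ _ _ _ hκpos hσ₃
  have hE1 : κ * ((σ₃ * x) ^ 2 / 2) ≤ κ * E := mul_le_mul_of_nonneg_left hEq hκpos.le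
  have hsE : κ * E ≤ (σ₂' - σ₂) * s * E := mul_le_mul_of_nonneg_right hκ' hEnn
  have hrx : lam * x / a ≤ lam * r * x / a := by
    rw [div_le_div_iff₀ hapos hapos]
    calc lam * x * a = lam * x * a * 1 := by ring
      _ ≤ lam * x * a * r :=
          mul_le_mul_of_nonneg_left hr1
            (mul_nonneg (mul_nonneg hlampos.le hxnn) hapos.le)
      _ = lam * r * x * a := by ring
  have hlin : σ₁' / a * r * x + lam * r * x / a = σ₁ / a * r * x := by
    rw [hlam']; field_simp; ring
  have hexps : lam * x / a + (k₂ * x + (σ₁' / a * r * x - σ₂' * s * E)) ≤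
      T + (σ₁ / a * r * x - σ₂ * s * E) := by
    have hsplit : σ₂' * s * E - σ₂ * s * E = (σ₂' - σ₂) * s * E := by ring
    linarith
  have key : x ^ k₀ * Real.exp (k₂ * x + (σ₁' / a * r * x - σ₂' * s * E)) ≤
      C1 * Real.exp T * a ^ k₀ * Real.exp (σ₁ / a * r * x - σ₂ * s * E) := by
    calc x ^ k₀ * Real.exp (k₂ * x + (σ₁' / a * r * x - σ₂' * s * E))
        ≤ (C1 * a ^ k₀ * Real.exp (lam * x / a)) *
            Real.exp (k₂ * x + (σ₁' / a * r * x - σ₂' * s * E)) :=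
          mul_le_mul_of_nonneg_right h1 (Real.exp_nonneg _)
      _ = C1 * a ^ k₀ *
            Real.exp (lam * x / a + (k₂ * x + (σ₁' / a * r * x - σ₂' * s * E))) := by
          rw [mul_assoc, ← Real.exp_add]
      _ ≤ C1 * a ^ k₀ * Real.exp (T + (σ₁ / a * r * x - σ₂ * s * E)) :=
          mul_le_mul_of_nonneg_left (Real.exp_le_exp.mpr hexps)
            (mul_pos hC1pos (pow_pos hapos k₀)).le
      _ = C1 * Real.exp T * a ^ k₀ * Real.exp (σ₁ / a * r * x - σ₂ * s * E) := by
          rw [Real.exp_add]; ring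
  rw [norm_mul, norm_mul, norm_pow, ← hx]
  calc x ^ k₀ * ‖Complex.exp (-(k₂ : ℂ) * τ)‖ * ‖v τ‖
      ≤ x ^ k₀ * Real.exp (k₂ * x) *
        (N * x * Real.exp (σ₁' / a * r * x - σ₂' * s * E)) := by
        apply mul_le_mul
        · exact mul_le_mul_of_nonneg_left hexp2 (pow_nonneg hxnn _)
        · exact hvb
        · exact norm_nonneg _
        · exact mul_nonneg (pow_nonneg hxnn _) (Real.exp_nonneg _)
    _ = (x ^ k₀ * Real.exp (k₂ * x + (σ₁' / a * r * x - σ₂' * s * E))) * (N * x) := by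
        rw [Real.exp_add]; ring
    _ ≤ (C1 * Real.exp T * a ^ k₀ * Real.exp (σ₁ / a * r * x - σ₂ * s * E)) * (N * x) :=
        mul_le_mul_of_nonneg_right key (mul_nonneg hN hxnn)
    _ = C1 * Real.exp T * a ^ k₀ * N * x * Real.exp (σ₁ / a * r * x - σ₂ * s * E) := by
        ring
end

section
/- Let b > 1 and M > ζ(b) be real numbers, σ₁, σ₂, σ₃ > 0 and δ > 0 real numbers, and let k₀, k₂ ≥ 0 and k₁ ≥ 1 be integers satisfying k₁ ≥ b k₀ + b k₂/σ₃. Let H = {z ∈ ℂ : c ≤ Im z ≤ d, Re z ≤ 0} be a closed horizontal strip. Then there exists a constant C₁ > 0, depending only on k₀, k₁, k₂, σ₁, σ₂, σ₃ and b (independent of ε and δ), such that for every ε ∈ ℂ with ε ≠ 0 and every sequence (v_β)_{β≥0} of functions v_β : ℂ → ℂ, the following inequality holds in the extended nonnegative reals [0,∞]: Σ_{β≥k₁} ( sup_{τ∈H} (|τ^{k₀} exp(−k₂ τ) v_{β−k₁}(τ)| / |τ|) · exp(−(σ₁/|ε|) r_b(β) |τ| + σ₂ s_b(β) exp(σ₃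 |τ|)) ) · δ^β/β! ≤ C₁ |ε|^{k₀} δ^{k₁} · Σ_{β≥0} ( sup_{τ∈H} (|v_β(τ)| / |τ|) · exp(−(σ₁/|ε|) r_b(β) |τ| + σ₂ s_b(β) exp(σ₃ |τ|)) ) · δ^β/β!, where all suprema and sums are taken in [0,∞]. -/
open scoped ENNReal

set_option maxHeartbeats 1000000

lemma aux_pow (k : ℕ) {a x : ℝ} (ha : 0 < a) (hx : 0 ≤ x) :
    x ^ k * Real.exp (-(a * x)) ≤ ((k : ℝ) / a) ^ k := by
  have hax : 0 ≤ a * x := mul_nonneg ha.le hx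
  rcases Nat.eq_zero_or_pos k with rfl | hk
  · simpa using Real.exp_le_one_iff.mpr (by linarith : -(a * x) ≤ 0)
  have h1 : (a * x) ^ k / (k.factorial : ℝ) ≤ Real.exp (a * x) := by
    refine le_trans ?_ (Real.sum_le_exp_of_nonneg hax (k + 1))
    exact Finset.single_le_sum (f := fun i => (a * x) ^ i / (i.factorial : ℝ))
      (fun i _ => by positivity) (Finset.self_mem_range_succ k)
  have h2 : ((k.factorial : ℕ) : ℝ) ≤ (k : ℝ) ^ k := by exact_mod_cast Nat.factorial_le_pow k
  have hfac : (0:ℝ) < (k.factorial : ℝ) := by positivity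
  have h3 : (a * x) ^ k ≤ (k : ℝ) ^ k * Real.exp (a * x) := by
    have := (div_le_iff₀ hfac).mp h1
    calc (a*x)^k ≤ Real.exp (a*x) * (k.factorial : ℝ) := this
      _ ≤ (k:ℝ)^k * Real.exp (a*x) := by rw [mul_comm]; gcongr
  have hak : (0:ℝ) < a ^ k := by positivity
  have h4 : x ^ k ≤ ((k:ℝ)/a) ^ k * Real.exp (a * x) := by
    have hx' : x ^ k = (a*x)^k / a^k := by rw [mul_pow]; field_simp
    rw [hx', div_pow]
    calc (a*x)^k / a^k ≤ ((k:ℝ)^k * Real.exp (a*x)) / a^k := by gcongr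
      _ = (k:ℝ)^k / a^k * Real.exp (a*x) := by ring
  calc x ^ k * Real.exp (-(a*x)) ≤ (((k:ℝ)/a)^k * Real.exp (a*x)) * Real.exp (-(a*x)) :=
        mul_le_mul_of_nonneg_right h4 (Real.exp_nonneg _)
    _ = ((k:ℝ)/a)^k := by rw [mul_assoc, ← Real.exp_add]; simp

lemma aux_rpow {q a y : ℝ} (hq : 0 ≤ q) (ha : 0 < a) (hy : 0 < y) :
    y ^ q * Real.exp (-(a * y)) ≤ (q / a) ^ q := by
  rcases eq_or_lt_of_le hq with rfl | hq
  · simpa using Real.exp_le_one_iff.mpr (by nlinarith : -(a * y) ≤ 0)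
  have hqa : 0 < q / a := div_pos hq ha
  have hay : 0 < a * y := mul_pos ha hy
  have hlog : Real.log (a * y / q) ≤ a * y / q - 1 :=
    Real.log_le_sub_one_of_pos (by positivity)
  have key : Real.log y * q ≤ Real.log (q / a) * q + a * y := by
    have hld : Real.log (a * y / q) = Real.log y - Real.log (q / a) := by
      rw [show a * y / q = y / (q / a) by field_simp,
        Real.log_div (ne_of_gt hy) (ne_of_gt hqa)]
    have h1 : q * Real.log (a * y / q) ≤ a * y - q := by
      calc q * Real.log (a*y/q) ≤ q * (a*y/q - 1) := by gcongr
        _ = a*y - q := by field_simp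
    rw [hld] at h1
    nlinarith
  have h5 : y ^ q ≤ (q/a)^q * Real.exp (a*y) := by
    rw [Real.rpow_def_of_pos hy, Real.rpow_def_of_pos hqa, ← Real.exp_add]
    exact Real.exp_le_exp.mpr key
  calc y ^ q * Real.exp (-(a*y)) ≤ ((q/a)^q * Real.exp (a*y)) * Real.exp (-(a*y)) :=
        mul_le_mul_of_nonneg_right h5 (Real.exp_nonneg _)
    _ = (q/a)^q := by rw [mul_assoc, ← Real.exp_add]; simp

lemma aux_rb {b : ℝ} (hb : 0 < b) (m k₁ : ℕ) (hk₁ : 1 ≤ k₁) :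
    1 / (((m + k₁ + 1 : ℕ) : ℝ)) ^ b ≤ rb b (m + k₁) - rb b m := by
  unfold rb
  have hsub : m + 1 ≤ m + k₁ + 1 := by omega
  rw [← Finset.sum_Ico_eq_sub _ hsub]
  have hmem : m + k₁ ∈ Finset.Ico (m + 1) (m + k₁ + 1) := by
    simp [Finset.mem_Ico]; omega
  refine le_trans ?_ (Finset.single_le_sum (f := fun n : ℕ => 1 / ((n : ℝ) + 1) ^ b)
    (fun (i : ℕ) _ =>
      one_div_nonneg.mpr (Real.rpow_nonneg (by positivity) b)) hmem)
  have : (((m + k₁ + 1 : ℕ) : ℝ)) = ((m + k₁ : ℕ) : ℝ) + 1 := by push_cast; ring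
  rw [this]

/-- Boundedness of `v(τ,z) ↦ τ^{k₀} exp(-k₂ τ) ∂_z^{-k₁} v(τ,z)` on the space
`SED_{(σ,H,ε,δ)}`: the sum over `β ≥ k₁` is reindexed as `β = m + k₁`, so that the
coefficient multiplied is `v_{β - k₁} = v_m`.  All sums and suprema are in `[0,∞]`.
The constant `C₁` depends only on `k₀, k₁, k₂, σ₁, σ₂, σ₃, b`: it is independent of
`δ`, `M`, the strip, `ε` and `v`. -/
theorem stmt9 (b : ℝ) (hb : 1 < b)
    (σ₁ σ₂ σ₃ : ℝ) (hσ₁ : 0 < σ₁) (hσ₂ : 0 < σ₂) (hσ₃ : 0 < σ₃)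
    (k₀ k₁ k₂ : ℕ) (hk₁ : 1 ≤ k₁)
    (hcond : b * (k₀ : ℝ) + b * (k₂ : ℝ) / σ₃ ≤ (k₁ : ℝ)) :
    ∃ C₁ : ℝ, 0 < C₁ ∧ ∀ M : ℝ, zetab b < M → ∀ δ : ℝ, 0 < δ → ∀ c d : ℝ, c < d →
      ∀ (ε : ℂ), ε ≠ 0 → ∀ v : ℕ → ℂ → ℂ,
      (∑' m : ℕ,
        (⨆ τ ∈ strip c d, ENNReal.ofReal
          (‖τ ^ k₀ * Complex.exp (-(k₂ : ℂ) * τ) * v m τ‖ / ‖τ‖ *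
            Real.exp (-(σ₁ / ‖ε‖) * rb b (m + k₁) * ‖τ‖
              + σ₂ * (M - rb b (m + k₁)) * Real.exp (σ₃ * ‖τ‖)))) *
          ENNReal.ofReal (δ ^ (m + k₁) / (((m + k₁).factorial : ℕ) : ℝ))) ≤
      ENNReal.ofReal (C₁ * ‖ε‖ ^ k₀ * δ ^ k₁) *
        ∑' β : ℕ,
          (⨆ τ ∈ strip c d, ENNReal.ofReal
            (‖v β τ‖ / ‖τ‖ *
              Real.exp (-(σ₁ / ‖ε‖) * rb b β * ‖τ‖
                + σ₂ * (M - rb b β) * Real.exp (σ₃ * ‖τ‖)))) *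
            ENNReal.ofReal (δ ^ β / ((β.factorial : ℕ) : ℝ)) := by
  have hq : (0:ℝ) ≤ (k₂ : ℝ) / σ₃ := by positivity
  set q : ℝ := (k₂ : ℝ) / σ₃ with hq_def
  set C₀ : ℝ := ((k₀ : ℝ) / σ₁) ^ k₀ * (q / σ₂) ^ q with hC₀_def
  have hC₀ : 0 ≤ C₀ := mul_nonneg (by positivity) (Real.rpow_nonneg (by positivity) q)
  refine ⟨(C₀ + 1) * ((k₁ : ℝ) + 1) ^ k₁, by positivity, ?_⟩
  intro M hM δ hδ c d hcd ε hε v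
  set A : ℝ := ‖ε‖ with hA_def
  have hA : 0 < A := norm_pos_iff.mpr hε
  have hCpos : (0:ℝ) ≤ (C₀ + 1) * ((k₁ : ℝ) + 1) ^ k₁ * A ^ k₀ * δ ^ k₁ :=
    mul_nonneg (mul_nonneg (mul_nonneg (by linarith) (by positivity)) (pow_nonneg hA.le _))
      (pow_nonneg hδ.le _)
  rw [← ENNReal.tsum_mul_left]
  refine ENNReal.tsum_le_tsum fun m => ?_
  set P : ℝ := ((m + k₁ + 1 : ℕ) : ℝ) with hP_def
  have hP1 : (1:ℝ) ≤ P := by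
    rw [hP_def]; exact_mod_cast Nat.one_le_iff_ne_zero.mpr (by omega)
  have hP0 : (0:ℝ) < P := lt_of_lt_of_le one_pos hP1
  set Δ : ℝ := rb b (m + k₁) - rb b m with hΔ_def
  have hΔlb : 1 / P ^ b ≤ Δ := aux_rb (by linarith) m k₁ hk₁
  have hPb : (0:ℝ) < P ^ b := Real.rpow_pos_of_pos hP0 b
  have hΔ : 0 < Δ := lt_of_lt_of_le (div_pos one_pos hPb) hΔlb
  set L : ℝ := C₀ * A ^ k₀ * P ^ k₁ with hL_def
  have hL : 0 ≤ L :=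
    mul_nonneg (mul_nonneg hC₀ (pow_nonneg hA.le _)) (pow_nonneg hP0.le _)
  -- pointwise bound on the strip
  have hpt : ∀ τ ∈ strip c d,
      ‖τ ^ k₀ * Complex.exp (-(k₂ : ℂ) * τ) * v m τ‖ / ‖τ‖ *
        Real.exp (-(σ₁ / A) * rb b (m + k₁) * ‖τ‖
          + σ₂ * (M - rb b (m + k₁)) * Real.exp (σ₃ * ‖τ‖))
      ≤ L * (‖v m τ‖ / ‖τ‖ *
        Real.exp (-(σ₁ / A) * rb b m * ‖τ‖
          + σ₂ * (M - rb b m) * Real.exp (σ₃ * ‖τ‖))) := by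
    rintro τ ⟨-, -, hre⟩
    set x : ℝ := ‖τ‖ with hx_def
    have hx : 0 ≤ x := norm_nonneg τ
    have hre2 : ((-(k₂ : ℂ)) * τ).re = -((k₂:ℝ) * τ.re) := by simp
    have habs : ‖τ ^ k₀ * Complex.exp (-(k₂ : ℂ) * τ) * v m τ‖
        = x ^ k₀ * Real.exp (-((k₂:ℝ) * τ.re)) * ‖v m τ‖ := by
      rw [norm_mul, norm_mul, norm_pow, Complex.norm_exp, hre2]
    have hbr : x ^ k₀ * Real.exp (-((k₂:ℝ) * τ.re)) *
        Real.exp (-(σ₁ / A) * Δ * x - σ₂ * Δ * Real.exp (σ₃ * x)) ≤ L := by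
      have h6 : Real.exp (-((k₂:ℝ) * τ.re)) ≤ Real.exp ((k₂:ℝ) * x) := by
        apply Real.exp_le_exp.mpr
        have h7 : -τ.re ≤ x := le_trans (neg_le_abs τ.re) (Complex.abs_re_le_norm τ)
        nlinarith [Nat.cast_nonneg (α := ℝ) k₂]
      have hσΔA : (0:ℝ) < σ₁ * Δ / A := div_pos (mul_pos hσ₁ hΔ) hA
      have hσΔ : (0:ℝ) < σ₂ * Δ := mul_pos hσ₂ hΔ
      have hΔinv0 : (0:ℝ) < 1/Δ := div_pos one_pos hΔ
      have hfinal : ((k₀:ℝ)/(σ₁ * Δ / A)) ^ k₀ * ((q/(σ₂ * Δ)) ^ q) ≤ L := by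
        have r1 : (k₀:ℝ)/(σ₁ * Δ / A) = ((k₀:ℝ)/σ₁) * A * (1/Δ) := by
          field_simp
        have r2 : q/(σ₂ * Δ) = (q/σ₂) * (1/Δ) := by
          field_simp [hΔ.ne']
        rw [r1, r2, mul_pow, mul_pow,
          Real.mul_rpow (div_nonneg hq hσ₂.le) hΔinv0.le]
        have hΔinv : 1/Δ ≤ P ^ b := by
          rw [div_le_iff₀ hΔ]
          calc (1:ℝ) = P^b * (1/P^b) := by rw [mul_one_div, div_self hPb.ne']
            _ ≤ P^b * Δ := by gcongr
        have hD : (1/Δ)^k₀ * (1/Δ)^q ≤ P ^ k₁ := by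
          have h8 : (1/Δ)^k₀ * (1/Δ)^q = (1/Δ) ^ ((k₀:ℝ) + q) := by
            rw [Real.rpow_add hΔinv0, Real.rpow_natCast]
          rw [h8]
          calc (1/Δ)^((k₀:ℝ)+q) ≤ (P^b)^((k₀:ℝ)+q) :=
                Real.rpow_le_rpow hΔinv0.le hΔinv (by positivity)
            _ = P ^ (b*((k₀:ℝ)+q)) := (Real.rpow_mul hP0.le _ _).symm
            _ ≤ P ^ ((k₁:ℝ)) := by
                apply Real.rpow_le_rpow_of_exponent_le hP1
                calc b*((k₀:ℝ)+q) = b*(k₀:ℝ) + b*(k₂:ℝ)/σ₃ := by rw [hq_def]; ring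
                  _ ≤ (k₁:ℝ) := hcond
            _ = P ^ k₁ := Real.rpow_natCast P k₁
        calc ((k₀:ℝ)/σ₁)^k₀ * A^k₀ * ((1/Δ)^k₀) * ((q/σ₂)^q * (1/Δ)^q)
            = (((k₀:ℝ)/σ₁)^k₀ * (q/σ₂)^q) * A^k₀ * ((1/Δ)^k₀ * (1/Δ)^q) := by ring
          _ ≤ (((k₀:ℝ)/σ₁)^k₀ * (q/σ₂)^q) * A^k₀ * P^k₁ := by
              have hnn : (0:ℝ) ≤ (((k₀:ℝ)/σ₁)^k₀ * (q/σ₂)^q) * A^k₀ :=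
                mul_nonneg (mul_nonneg (by positivity)
                  (Real.rpow_nonneg (div_nonneg hq hσ₂.le) q)) (pow_nonneg hA.le _)
              exact mul_le_mul_of_nonneg_left hD hnn
          _ = L := by rw [hL_def, hC₀_def]
      have t1 : x ^ k₀ * Real.exp (-(σ₁ * Δ / A * x)) ≤ ((k₀:ℝ)/(σ₁ * Δ / A)) ^ k₀ :=
        aux_pow k₀ hσΔA hx
      have t2 : Real.exp (σ₃ * x) ^ q * Real.exp (-(σ₂ * Δ * Real.exp (σ₃ * x)))
          ≤ (q/(σ₂ * Δ)) ^ q := aux_rpow hq hσΔ (Real.exp_pos _)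
      have e1 : Real.exp ((k₂:ℝ) * x) *
            Real.exp (-(σ₁ / A) * Δ * x - σ₂ * Δ * Real.exp (σ₃ * x))
          = Real.exp ((k₂:ℝ) * x + (-(σ₁ / A) * Δ * x - σ₂ * Δ * Real.exp (σ₃ * x))) :=
        (Real.exp_add _ _).symm
      have e2 : Real.exp (-(σ₁ * Δ / A * x)) *
            (Real.exp (σ₃ * x * q) * Real.exp (-(σ₂ * Δ * Real.exp (σ₃ * x))))
          = Real.exp (-(σ₁ * Δ / A * x) + (σ₃ * x * q + -(σ₂ * Δ * Real.exp (σ₃ * x)))) := by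
        rw [← Real.exp_add, ← Real.exp_add]
      have e3 : (k₂:ℝ) * x + (-(σ₁ / A) * Δ * x - σ₂ * Δ * Real.exp (σ₃ * x))
          = -(σ₁ * Δ / A * x) + (σ₃ * x * q + -(σ₂ * Δ * Real.exp (σ₃ * x))) := by
        rw [hq_def]
        field_simp
        ring
      have lhs_eq : x ^ k₀ * Real.exp ((k₂:ℝ) * x) *
            Real.exp (-(σ₁ / A) * Δ * x - σ₂ * Δ * Real.exp (σ₃ * x))
          = x ^ k₀ * Real.exp ((k₂:ℝ) * x + (-(σ₁ / A) * Δ * x - σ₂ * Δ * Real.exp (σ₃ * x))) := by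
        rw [Real.exp_add]; ring
      have rhs_eq : (x ^ k₀ * Real.exp (-(σ₁ * Δ / A * x))) *
            (Real.exp (σ₃ * x * q) * Real.exp (-(σ₂ * Δ * Real.exp (σ₃ * x))))
          = x ^ k₀ * Real.exp (-(σ₁ * Δ / A * x) + (σ₃ * x * q + -(σ₂ * Δ * Real.exp (σ₃ * x)))) := by
        rw [Real.exp_add, Real.exp_add]; ring
      have teq : x ^ k₀ * Real.exp ((k₂:ℝ) * x) *
            Real.exp (-(σ₁ / A) * Δ * x - σ₂ * Δ * Real.exp (σ₃ * x))
          = (x ^ k₀ * Real.exp (-(σ₁ * Δ / A * x))) *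
            (Real.exp (σ₃ * x) ^ q * Real.exp (-(σ₂ * Δ * Real.exp (σ₃ * x)))) := by
        rw [show Real.exp (σ₃ * x) ^ q = Real.exp (σ₃ * x * q) from (Real.exp_mul _ _).symm]
        rw [lhs_eq, e3, rhs_eq]
      calc x ^ k₀ * Real.exp (-((k₂:ℝ) * τ.re)) *
            Real.exp (-(σ₁ / A) * Δ * x - σ₂ * Δ * Real.exp (σ₃ * x))
          ≤ x ^ k₀ * Real.exp ((k₂:ℝ) * x) *
            Real.exp (-(σ₁ / A) * Δ * x - σ₂ * Δ * Real.exp (σ₃ * x)) := by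
            apply mul_le_mul_of_nonneg_right _ (Real.exp_nonneg _)
            exact mul_le_mul_of_nonneg_left h6 (pow_nonneg hx _)
        _ = (x ^ k₀ * Real.exp (-(σ₁ * Δ / A * x))) *
            (Real.exp (σ₃ * x) ^ q * Real.exp (-(σ₂ * Δ * Real.exp (σ₃ * x)))) := teq
        _ ≤ ((k₀:ℝ)/(σ₁ * Δ / A)) ^ k₀ * ((q/(σ₂ * Δ)) ^ q) := by
            apply mul_le_mul t1 t2
            · exact mul_nonneg (Real.rpow_nonneg (Real.exp_nonneg _) q) (Real.exp_nonneg _)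
            · exact pow_nonneg (div_nonneg (Nat.cast_nonneg _) hσΔA.le) _
        _ ≤ L := hfinal
    have hexp : Real.exp (-(σ₁ / A) * rb b (m + k₁) * x
          + σ₂ * (M - rb b (m + k₁)) * Real.exp (σ₃ * x))
        = Real.exp (-(σ₁ / A) * Δ * x - σ₂ * Δ * Real.exp (σ₃ * x)) *
          Real.exp (-(σ₁ / A) * rb b m * x + σ₂ * (M - rb b m) * Real.exp (σ₃ * x)) := by
      rw [← Real.exp_add]
      congr 1
      rw [hΔ_def]
      ring
    rw [habs, hexp]
    have hG : 0 ≤ ‖v m τ‖ / x *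
        Real.exp (-(σ₁ / A) * rb b m * x + σ₂ * (M - rb b m) * Real.exp (σ₃ * x)) :=
      mul_nonneg (div_nonneg (norm_nonneg _) hx) (Real.exp_nonneg _)
    calc x ^ k₀ * Real.exp (-((k₂:ℝ) * τ.re)) * ‖v m τ‖ / x *
          (Real.exp (-(σ₁ / A) * Δ * x - σ₂ * Δ * Real.exp (σ₃ * x)) *
            Real.exp (-(σ₁ / A) * rb b m * x + σ₂ * (M - rb b m) * Real.exp (σ₃ * x)))
        = (x ^ k₀ * Real.exp (-((k₂:ℝ) * τ.re)) *
            Real.exp (-(σ₁ / A) * Δ * x - σ₂ * Δ * Real.exp (σ₃ * x))) *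
          (‖v m τ‖ / x *
            Real.exp (-(σ₁ / A) * rb b m * x + σ₂ * (M - rb b m) * Real.exp (σ₃ * x))) := by
          ring
      _ ≤ L * (‖v m τ‖ / x *
            Real.exp (-(σ₁ / A) * rb b m * x + σ₂ * (M - rb b m) * Real.exp (σ₃ * x))) :=
          mul_le_mul_of_nonneg_right hbr hG
  -- sup bound
  have key1 : (⨆ τ ∈ strip c d, ENNReal.ofReal
        (‖τ ^ k₀ * Complex.exp (-(k₂ : ℂ) * τ) * v m τ‖ / ‖τ‖ *
          Real.exp (-(σ₁ / A) * rb b (m + k₁) * ‖τ‖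
            + σ₂ * (M - rb b (m + k₁)) * Real.exp (σ₃ * ‖τ‖))))
      ≤ ENNReal.ofReal L * ⨆ τ ∈ strip c d, ENNReal.ofReal
        (‖v m τ‖ / ‖τ‖ *
          Real.exp (-(σ₁ / A) * rb b m * ‖τ‖
            + σ₂ * (M - rb b m) * Real.exp (σ₃ * ‖τ‖))) := by
    refine iSup₂_le fun τ hτ => ?_
    refine le_trans (ENNReal.ofReal_le_ofReal (hpt τ hτ)) ?_
    rw [ENNReal.ofReal_mul hL]
    exact mul_le_mul_right (le_iSup₂ (f := fun τ (_ : τ ∈ strip c d) => ENNReal.ofReal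
      (‖v m τ‖ / ‖τ‖ *
        Real.exp (-(σ₁ / A) * rb b m * ‖τ‖
          + σ₂ * (M - rb b m) * Real.exp (σ₃ * ‖τ‖)))) τ hτ) _
  -- arithmetic with the factorials
  have hfac1 : (0:ℝ) < (((m + k₁).factorial : ℕ) : ℝ) := by positivity
  have hfac2 : (0:ℝ) < ((m.factorial : ℕ) : ℝ) := by positivity
  have harith : L * (δ ^ (m + k₁) / (((m + k₁).factorial : ℕ) : ℝ))
      ≤ (C₀ + 1) * ((k₁ : ℝ) + 1) ^ k₁ * A ^ k₀ * δ ^ k₁ *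
        (δ ^ m / ((m.factorial : ℕ) : ℝ)) := by
    have hnat : ((m.factorial : ℕ) : ℝ) * ((m:ℝ)+1)^k₁ ≤ (((m + k₁).factorial : ℕ) : ℝ) := by
      exact_mod_cast Nat.factorial_mul_pow_le_factorial (m := m) (n := k₁)
    have hPle : P ^ k₁ ≤ ((k₁:ℝ)+1)^k₁ * ((m:ℝ)+1)^k₁ := by
      rw [← mul_pow]
      apply pow_le_pow_left₀ hP0.le
      rw [hP_def]
      push_cast
      nlinarith [Nat.cast_nonneg (α := ℝ) m, Nat.cast_nonneg (α := ℝ) k₁]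
    have key : C₀ * P^k₁ * ((m.factorial : ℕ) : ℝ)
        ≤ (C₀+1) * ((k₁:ℝ)+1)^k₁ * (((m + k₁).factorial : ℕ) : ℝ) := by
      calc C₀ * P^k₁ * ((m.factorial : ℕ) : ℝ)
          ≤ C₀ * (((k₁:ℝ)+1)^k₁ * ((m:ℝ)+1)^k₁) * ((m.factorial : ℕ) : ℝ) := by
            apply mul_le_mul_of_nonneg_right _ hfac2.le
            exact mul_le_mul_of_nonneg_left hPle hC₀
        _ = C₀ * ((k₁:ℝ)+1)^k₁ * (((m.factorial : ℕ) : ℝ) * ((m:ℝ)+1)^k₁) := by ring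
        _ ≤ C₀ * ((k₁:ℝ)+1)^k₁ * (((m + k₁).factorial : ℕ) : ℝ) := by
            apply mul_le_mul_of_nonneg_left hnat
            exact mul_nonneg hC₀ (by positivity)
        _ ≤ (C₀+1) * ((k₁:ℝ)+1)^k₁ * (((m + k₁).factorial : ℕ) : ℝ) := by
            apply mul_le_mul_of_nonneg_right _ hfac1.le
            apply mul_le_mul_of_nonneg_right _ (by positivity)
            linarith
    have ht : (0:ℝ) ≤ A^k₀ * δ^k₁ * δ^m :=
      mul_nonneg (mul_nonneg (pow_nonneg hA.le _) (pow_nonneg hδ.le _)) (pow_nonneg hδ.le _)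
    calc L * (δ ^ (m + k₁) / (((m + k₁).factorial : ℕ) : ℝ))
        = (C₀ * P^k₁ * ((m.factorial : ℕ) : ℝ)) * (A^k₀ * δ^k₁ * δ^m)
            / (((m + k₁).factorial : ℕ) : ℝ) / ((m.factorial : ℕ) : ℝ) := by
          rw [hL_def, pow_add]
          field_simp
      _ ≤ ((C₀+1) * ((k₁:ℝ)+1)^k₁ * (((m + k₁).factorial : ℕ) : ℝ)) * (A^k₀ * δ^k₁ * δ^m)
            / (((m + k₁).factorial : ℕ) : ℝ) / ((m.factorial : ℕ) : ℝ) := by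
          have h9 := mul_le_mul_of_nonneg_right key ht
          exact div_le_div_of_nonneg_right (div_le_div_of_nonneg_right h9 hfac1.le) hfac2.le
      _ = (C₀ + 1) * ((k₁ : ℝ) + 1) ^ k₁ * A ^ k₀ * δ ^ k₁ *
            (δ ^ m / ((m.factorial : ℕ) : ℝ)) := by
          field_simp
  -- combine
  refine le_trans (mul_le_mul_left key1 _) ?_
  calc (ENNReal.ofReal L * ⨆ τ ∈ strip c d, ENNReal.ofReal
          (‖v m τ‖ / ‖τ‖ *
            Real.exp (-(σ₁ / A) * rb b m * ‖τ‖
              + σ₂ * (M - rb b m) * Real.exp (σ₃ * ‖τ‖)))) *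
        ENNReal.ofReal (δ ^ (m + k₁) / (((m + k₁).factorial : ℕ) : ℝ))
      = (⨆ τ ∈ strip c d, ENNReal.ofReal
          (‖v m τ‖ / ‖τ‖ *
            Real.exp (-(σ₁ / A) * rb b m * ‖τ‖
              + σ₂ * (M - rb b m) * Real.exp (σ₃ * ‖τ‖)))) *
        ENNReal.ofReal (L * (δ ^ (m + k₁) / (((m + k₁).factorial : ℕ) : ℝ))) := by
        rw [ENNReal.ofReal_mul hL]; ring
    _ ≤ (⨆ τ ∈ strip c d, ENNReal.ofReal
          (‖v m τ‖ / ‖τ‖ *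
            Real.exp (-(σ₁ / A) * rb b m * ‖τ‖
              + σ₂ * (M - rb b m) * Real.exp (σ₃ * ‖τ‖)))) *
        ENNReal.ofReal ((C₀ + 1) * ((k₁ : ℝ) + 1) ^ k₁ * A ^ k₀ * δ ^ k₁ *
          (δ ^ m / ((m.factorial : ℕ) : ℝ))) :=
        mul_le_mul_right (ENNReal.ofReal_le_ofReal harith) _
    _ = ENNReal.ofReal ((C₀ + 1) * ((k₁ : ℝ) + 1) ^ k₁ * A ^ k₀ * δ ^ k₁) *
        ((⨆ τ ∈ strip c d, ENNReal.ofReal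
          (‖v m τ‖ / ‖τ‖ *
            Real.exp (-(σ₁ / A) * rb b m * ‖τ‖
              + σ₂ * (M - rb b m) * Real.exp (σ₃ * ‖τ‖)))) *
        ENNReal.ofReal (δ ^ m / ((m.factorial : ℕ) : ℝ))) := by
        rw [ENNReal.ofReal_mul hCpos]; ring
end
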